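/- For ρ ∈ (0,∞)^K, the gradient of φ(ρ) = −log Z(ρ) + ∑_k (β_k ρ_k − α_k log ρ_k) vanishes at ρ if and only if ρ satisfies the fixed point equations λ_k = ρ_k(μ_k + γ_k B_k(ρ)) for all k, where B_k(ρ) = (∑_{n: n+f_k∉X} ρ^n/n!)/Z(ρ). -/

import Mathlib

open Finset

/-- The state space `X = {n ∈ ℕ^K : ∑_j A_j n_j ≤ C}` as a `Finset` of `Fin K → ℕ`. -/
def XF (K C : ℕ) (A : Fin K → ℕ) : Finset (Fin K → ℕ) :=
  (Fintype.piFinset fun _ => Finset.range (C + 1)).filter fun n => ∑ k, A k * n k ≤ C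

/-- The partition function `Z(ρ) = ∑_{n ∈ X} ρ^n/n!`. -/
noncomputable def Zf (K C : ℕ) (A : Fin K → ℕ) (ρ : Fin K → ℝ) : ℝ :=
  ∑ n ∈ XF K C A, ∏ j, ρ j ^ n j / (Nat.factorial (n j) : ℝ)

/-- The blocking probability `B_k(ρ) = (∑_{n ∈ X : n+f_k ∉ X} ρ^n/n!)/Z(ρ)`. -/
noncomputable def Bk (K C : ℕ) (A : Fin K → ℕ) (ρ : Fin K → ℝ) (k : Fin K) : ℝ :=
  (∑ n ∈ (XF K C A).filter (fun n => n + Pi.single k 1 ∉ XF K C A),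
      ∏ j, ρ j ^ n j / (Nat.factorial (n j) : ℝ)) / Zf K C A ρ

/-- The energy function `φ(ρ) = −log Z(ρ) + ∑_k (β_k ρ_k − α_k log ρ_k)` with
`α_k = λ_k/γ_k` and `β_k = (γ_k + μ_k)/γ_k`. -/
noncomputable def phiE (K C : ℕ) (A : Fin K → ℕ) (lam gam mu : Fin K → ℝ)
    (ρ : Fin K → ℝ) : ℝ :=
  -Real.log (Zf K C A ρ) +
    ∑ k, ((gam k + mu k) / gam k * ρ k - lam k / gam k * Real.log (ρ k))

lemma mem_XF_iff {K C : ℕ} {A : Fin K → ℕ} (hA : ∀ j, 0 < A j) (n : Fin K → ℕ) :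
    n ∈ XF K C A ↔ ∑ j, A j * n j ≤ C := by
  constructor
  · exact fun h => (Finset.mem_filter.mp h).2
  · intro h
    refine Finset.mem_filter.mpr ⟨Fintype.mem_piFinset.mpr fun j => Finset.mem_range.mpr ?_, h⟩
    have h1 : A j * n j ≤ C :=
      le_trans (Finset.single_le_sum (f := fun i => A i * n i) (fun i _ => Nat.zero_le _) (mem_univ j)) h
    have h2 := hA j
    have : n j ≤ A j * n j := Nat.le_mul_of_pos_left (n j) (hA j)
    omega

lemma Zf_pos {K C : ℕ} {A : Fin K → ℕ} (hA : ∀ j, 0 < A j) {ρ : Fin K → ℝ}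
    (hρ : ∀ j, 0 < ρ j) : 0 < Zf K C A ρ := by
  apply Finset.sum_pos'
  · intro n _
    exact Finset.prod_nonneg fun j _ => div_nonneg (pow_nonneg (hρ j).le _) (by positivity)
  · refine ⟨0, (mem_XF_iff hA 0).mpr (by simp), ?_⟩
    simp [Nat.factorial]

noncomputable def Sblock (K C : ℕ) (A : Fin K → ℕ) (ρ : Fin K → ℝ) (k : Fin K) : ℝ :=
  ∑ n ∈ (XF K C A).filter (fun n => n + Pi.single k 1 ∉ XF K C A),
      ∏ j, ρ j ^ n j / (Nat.factorial (n j) : ℝ)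

lemma deriv_sum_eq {K C : ℕ} {A : Fin K → ℕ} (hA : ∀ j, 0 < A j) (ρ : Fin K → ℝ) (k : Fin K) :
    ∑ n ∈ XF K C A, ((n k : ℝ) * ρ k ^ (n k - 1) / (Nat.factorial (n k) : ℝ) *
        ∏ j ∈ univ.erase k, ρ j ^ n j / (Nat.factorial (n j) : ℝ)) =
      Zf K C A ρ - Sblock K C A ρ k := by
  have hsplit := Finset.sum_filter_add_sum_filter_not (XF K C A)
    (fun n => n + Pi.single k 1 ∉ XF K C A)
    (fun n => ∏ j, ρ j ^ n j / (Nat.factorial (n j) : ℝ))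
  have hZ : Zf K C A ρ - Sblock K C A ρ k =
      ∑ n ∈ (XF K C A).filter (fun n => ¬ n + Pi.single k 1 ∉ XF K C A),
        ∏ j, ρ j ^ n j / (Nat.factorial (n j) : ℝ) := by
    unfold Zf Sblock; linarith [hsplit]
  rw [hZ]
  rw [← Finset.sum_filter_of_ne (p := fun n => n k ≠ 0)
    (by intro n _ h hnk; apply h; rw [hnk]; simp)]
  refine Finset.sum_nbij' (i := fun n => n - Pi.single k 1) (j := fun m => m + Pi.single k 1)
    ?_ ?_ ?_ ?_ ?_
  · intro n hn
    rw [Finset.mem_filter] at hn ⊢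
    obtain ⟨hnX, hnk⟩ := hn
    have hadd : n - Pi.single k 1 + Pi.single k 1 = n := by
      funext j
      by_cases hj : j = k
      · subst hj
        simp only [Pi.add_apply, Pi.sub_apply, Pi.single_eq_same]
        omega
      · simp [Pi.add_apply, Pi.sub_apply, Pi.single_apply, hj]
    constructor
    · rw [mem_XF_iff hA] at hnX ⊢
      refine le_trans (Finset.sum_le_sum fun j _ => ?_) hnX
      exact Nat.mul_le_mul_left _ (by simp only [Pi.sub_apply]; exact Nat.sub_le _ _)
    · rw [hadd]; simpa using hnX
  · intro m hm
    rw [Finset.mem_filter, not_not] at hm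
    obtain ⟨hmX, hmk⟩ := hm
    rw [Finset.mem_filter]
    refine ⟨hmk, ?_⟩
    simp [Pi.add_apply, Pi.single_apply]
  · intro n hn
    rw [Finset.mem_filter] at hn
    funext j
    by_cases hj : j = k
    · subst hj
      simp only [Pi.add_apply, Pi.sub_apply, Pi.single_eq_same]
      omega
    · simp [Pi.add_apply, Pi.sub_apply, Pi.single_apply, hj]
  · intro m _
    funext j
    simp only [Pi.add_apply, Pi.sub_apply, Pi.single_apply]
    by_cases hj : j = k <;> simp [hj]
  · intro n hn
    rw [Finset.mem_filter] at hn
    obtain ⟨_, hnk⟩ := hn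
    obtain ⟨s, hs⟩ : ∃ s, n k = s + 1 := ⟨n k - 1, by omega⟩
    beta_reduce
    set m : Fin K → ℕ := n - Pi.single k 1 with hm
    have h1 : m k = s := by simp [hm, Pi.sub_apply, hs]
    have h2 : ∀ j ∈ univ.erase k, m j = n j := by
      intro j hj
      simp [hm, Pi.sub_apply, Pi.single_apply, (Finset.mem_erase.mp hj).1]
    rw [← Finset.mul_prod_erase univ
      (fun j => ρ j ^ m j / (Nat.factorial (m j) : ℝ)) (mem_univ k)]
    have hprod : ∏ j ∈ univ.erase k, ρ j ^ n j / (Nat.factorial (n j) : ℝ)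
        = ∏ j ∈ univ.erase k, ρ j ^ m j / (Nat.factorial (m j) : ℝ) :=
      Finset.prod_congr rfl fun j hj => by rw [h2 j hj]
    rw [hprod]
    congr 1
    rw [h1, hs, Nat.factorial_succ]
    have : (Nat.factorial s : ℝ) ≠ 0 := Nat.cast_ne_zero.mpr (Nat.factorial_ne_zero s)
    push_cast
    field_simp

lemma hasDerivAt_Zf {K C : ℕ} {A : Fin K → ℕ} (hA : ∀ j, 0 < A j) {ρ : Fin K → ℝ}
    (hρ : ∀ j, 0 < ρ j) (k : Fin K) :
    HasDerivAt (fun t => Zf K C A (Function.update ρ k t))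
      (Zf K C A ρ - Sblock K C A ρ k) (ρ k) := by
  have hfun : (fun t => Zf K C A (Function.update ρ k t)) =
      fun t => ∑ n ∈ XF K C A, t ^ n k / (Nat.factorial (n k) : ℝ) *
        ∏ j ∈ univ.erase k, ρ j ^ n j / (Nat.factorial (n j) : ℝ) := by
    funext t
    unfold Zf
    refine Finset.sum_congr rfl fun n _ => ?_
    rw [← Finset.mul_prod_erase univ
      (fun j => Function.update ρ k t j ^ n j / (Nat.factorial (n j) : ℝ)) (mem_univ k)]
    congr 1
    · simp
    · exact Finset.prod_congr rfl fun j hj => by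
        rw [Function.update_of_ne (Finset.mem_erase.mp hj).1]
  rw [hfun, ← deriv_sum_eq hA ρ k]
  exact HasDerivAt.fun_sum fun n _ =>
    ((hasDerivAt_pow (n k) (ρ k)).div_const _).mul_const _

lemma hasDerivAt_phiE {K C : ℕ} {A : Fin K → ℕ} (hA : ∀ j, 0 < A j)
    (lam gam mu : Fin K → ℝ) (hgam : ∀ k, 0 < gam k)
    {ρ : Fin K → ℝ} (hρ : ∀ j, 0 < ρ j) (k : Fin K) :
    HasDerivAt (fun t => phiE K C A lam gam mu (Function.update ρ k t))
      (-((Zf K C A ρ - Sblock K C A ρ k) / Zf K C A ρ) +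
        ((gam k + mu k) / gam k - lam k / gam k * (ρ k)⁻¹)) (ρ k) := by
  have hZpos := Zf_pos (C := C) hA hρ
  unfold phiE
  refine HasDerivAt.add ?_ ?_
  · have h := ((hasDerivAt_Zf hA hρ k).log
      (by rw [Function.update_eq_self]; exact hZpos.ne')).neg
    rwa [Function.update_eq_self] at h
  · have : ∀ j : Fin K, HasDerivAt
        (fun t => (gam j + mu j) / gam j * Function.update ρ k t j -
          lam j / gam j * Real.log (Function.update ρ k t j))
        (if j = k then (gam k + mu k) / gam k - lam k / gam k * (ρ k)⁻¹ else 0) (ρ k) := by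
      intro j
      by_cases hj : j = k
      · subst hj
        simp only [Function.update_self, if_pos rfl]
        have h1 : HasDerivAt (fun t : ℝ => (gam j + mu j) / gam j * t)
            ((gam j + mu j) / gam j) (ρ j) := by
          simpa using (hasDerivAt_id (ρ j)).const_mul ((gam j + mu j) / gam j)
        have h2 : HasDerivAt (fun t : ℝ => lam j / gam j * Real.log t)
            (lam j / gam j * (ρ j)⁻¹) (ρ j) :=
          (Real.hasDerivAt_log (hρ j).ne').const_mul _
        exact h1.sub h2
      · simp only [Function.update_of_ne hj, if_neg hj]
        exact hasDerivAt_const _ _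
    have hs := HasDerivAt.fun_sum (u := Finset.univ) (fun j _ => this j)
    simpa using hs


/-- `∇φ(ρ) = 0` iff `ρ` satisfies the fixed point equations
`λ_k = ρ_k (μ_k + γ_k B_k(ρ))` for all `k`. -/
theorem grad_phi_eq_zero_iff (K C : ℕ) (hK : 0 < K) (hC : 0 < C)
    (A : Fin K → ℕ) (hA : ∀ j, 0 < A j)
    (lam gam mu : Fin K → ℝ)
    (hlam : ∀ k, 0 < lam k) (hgam : ∀ k, 0 < gam k) (hmu : ∀ k, 0 ≤ mu k)
    (ρ : Fin K → ℝ) (hρ : ∀ j, 0 < ρ j) :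
    (∀ k, HasDerivAt (fun t : ℝ => phiE K C A lam gam mu (Function.update ρ k t)) 0 (ρ k)) ↔
      ∀ k, lam k = ρ k * (mu k + gam k * Bk K C A ρ k) := by
  have hZ := Zf_pos (C := C) hA hρ
  refine forall_congr' fun k => ?_
  have hd := hasDerivAt_phiE (C := C) hA lam gam mu hgam hρ k
  have hB : Bk K C A ρ k = Sblock K C A ρ k / Zf K C A ρ := rfl
  have key : (-((Zf K C A ρ - Sblock K C A ρ k) / Zf K C A ρ) +
      ((gam k + mu k) / gam k - lam k / gam k * (ρ k)⁻¹) = 0) ↔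
      lam k = ρ k * (mu k + gam k * Bk K C A ρ k) := by
    rw [hB]
    have h1 : Zf K C A ρ ≠ 0 := hZ.ne'
    have h2 : gam k ≠ 0 := (hgam k).ne'
    have h3 : ρ k ≠ 0 := (hρ k).ne'
    field_simp
    constructor
    · intro h
      apply mul_left_cancel₀ h2
      linear_combination (-(gam k)) * h
    · intro h
      linear_combination -h
  constructor
  · intro h
    exact key.mp (h.unique hd).symm
  · intro h
    have h0 := key.mpr h
    rw [← h0]
    exact hd
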